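/- arXiv:1004.3655 — 2 statements merged into one kernel-verified Lean document; each statement's English description precedes it below -/
import Mathlib

section
/- For every finiteness space 𝒜, the set {ā ⊆ M(|𝒜|) : ⋃_{μ ∈ ā} supp(μ) ∈ F(𝒜)} is a finiteness structure on M(|𝒜|) (so !𝒜 is a finiteness space), and moreover it equals ({a^! : a ∈ F(𝒜)})^⊥⊥. -/
open Set

namespace FinitenessPaper

/-- The predual of a set `F` of subsets of `A`:
all subsets of `A` whose intersection with every member of `F` is finite. -/
def predual {α : Type*} (A : Set α) (F : Set (Set α)) : Set (Set α) :=
  {a' | a' ⊆ A ∧ ∀ a ∈ F, (a ∩ a').Finite}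

/-- A finiteness space: a web together with a finiteness structure on it. -/
structure FinSpace (α : Type*) where
  web : Set α
  fin : Set (Set α)
  isFin : predual web (predual web fin) = fin

/-- `M(a)`: the set of finite multisets all of whose elements lie in `a`. -/
def bangSet {α : Type*} (a : Set α) : Set (Multiset α) := {μ | ∀ x ∈ μ, x ∈ a}

lemma predual_antitone {α : Type*} (A : Set α) {F G : Set (Set α)} (h : F ⊆ G) :
    predual A G ⊆ predual A F :=
  fun _ hx => ⟨hx.1, fun a ha => hx.2 a (h ha)⟩

lemma subset_predual_predual {α : Type*} (A : Set α) {F : Set (Set α)}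
    (hF : ∀ a ∈ F, a ⊆ A) : F ⊆ predual A (predual A F) := by
  intro a ha
  exact ⟨hF a ha, fun b hb => by rw [Set.inter_comm]; exact hb.2 a ha⟩

lemma predual_triple {α : Type*} (A : Set α) {F : Set (Set α)}
    (hF : ∀ a ∈ F, a ⊆ A) :
    predual A (predual A (predual A F)) = predual A F := by
  apply Set.Subset.antisymm
  · exact predual_antitone A (subset_predual_predual A hF)
  · exact subset_predual_predual A (fun a ha => ha.1)

/-- The exponential: `{ā ⊆ M(|𝒜|) : ⋃_{μ ∈ ā} supp μ ∈ F(𝒜)}` is a finiteness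
structure on `M(|𝒜|)`, and it equals `({a^! : a ∈ F(𝒜)})^⊥⊥`. -/
theorem bang_finiteness_structure {α : Type*} (A : FinSpace α) :
    (predual (bangSet A.web) (predual (bangSet A.web)
        {s | s ⊆ bangSet A.web ∧ (⋃ μ ∈ s, {x : α | x ∈ μ}) ∈ A.fin})
      = {s | s ⊆ bangSet A.web ∧ (⋃ μ ∈ s, {x : α | x ∈ μ}) ∈ A.fin}) ∧
    {s | s ⊆ bangSet A.web ∧ (⋃ μ ∈ s, {x : α | x ∈ μ}) ∈ A.fin}
      = predual (bangSet A.web) (predual (bangSet A.web)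
          {m | ∃ a ∈ A.fin, m = bangSet a}) := by
  classical
  set W := A.web with hW
  set F := A.fin with hF
  -- every finitary set is contained in the web
  have hfin_sub : ∀ a ∈ F, a ⊆ W := by
    intro a ha
    rw [hF, ← A.isFin] at ha
    exact ha.1
  set E : Set (Set (Multiset α)) := {m | ∃ a ∈ F, m = bangSet a} with hE
  set G : Set (Set (Multiset α)) :=
    {s | s ⊆ bangSet W ∧ (⋃ μ ∈ s, {x : α | x ∈ μ}) ∈ F} with hG
  -- Main claim: G = predual² E
  have key : G = predual (bangSet W) (predual (bangSet W) E) := by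
    apply Set.Subset.antisymm
    · -- G ⊆ E^⊥⊥
      rintro s ⟨hsW, hsu⟩
      refine ⟨hsW, ?_⟩
      intro t ht
      have hmem : bangSet (⋃ μ ∈ s, {x : α | x ∈ μ}) ∈ E := ⟨_, hsu, rfl⟩
      have := ht.2 _ hmem
      refine this.subset ?_
      rintro μ ⟨hμt, hμs⟩
      refine ⟨?_, hμt⟩
      intro x hx
      exact Set.mem_biUnion hμs hx
    · -- E^⊥⊥ ⊆ G
      rintro s ⟨hsW, hs⟩
      refine ⟨hsW, ?_⟩
      set u : Set α := ⋃ μ ∈ s, {x : α | x ∈ μ} with hu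
      rw [hF, ← A.isFin]
      have huW : u ⊆ W := by
        intro x hx
        have hx' : ∃ μ ∈ s, x ∈ μ := by simpa [hu] using hx
        obtain ⟨μ, hμs, hxμ⟩ := hx'
        exact hsW hμs x hxμ
      refine ⟨huW, ?_⟩
      intro b hb
      by_contra hbad
      have hinf : (b ∩ u).Infinite := hbad
      -- choose, for every `x ∈ b ∩ u`, a witness multiset in `s` containing `x`
      have hch : ∀ x : α, ∃ m : Multiset α, x ∈ b ∩ u → m ∈ s ∧ x ∈ m := by
        intro x
        by_cases hx : x ∈ b ∩ u
        · obtain ⟨μ, hμs, hxμ⟩ := Set.mem_iUnion₂.mp hx.2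
          exact ⟨μ, fun _ => ⟨hμs, hxμ⟩⟩
        · exact ⟨0, fun h => absurd h hx⟩
      choose f hf using hch
      set T : Set (Multiset α) := f '' (b ∩ u) with hT
      have hTs : T ⊆ s := by
        rintro m ⟨x, hx, rfl⟩
        exact (hf x hx).1
      -- T is in the predual of E
      have hTE : T ∈ predual (bangSet W) E := by
        refine ⟨hTs.trans hsW, ?_⟩
        rintro m ⟨a, haF, rfl⟩
        have hab : (a ∩ b).Finite := hb.2 a haF
        refine (hab.image f).subset ?_
        rintro m ⟨hma, x, hx, rfl⟩
        exact ⟨x, ⟨hma x (hf x hx).2, hx.1⟩, rfl⟩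
      have hTfin : T.Finite := by
        have := hs T hTE
        have hTT : T ∩ s = T := Set.inter_eq_self_of_subset_left hTs
        rwa [hTT] at this
      -- but then b ∩ u would be finite: it is covered by the supports of T
      have hcov : b ∩ u ⊆ ⋃ m ∈ T, {x : α | x ∈ m} := by
        intro x hx
        exact Set.mem_biUnion ⟨x, hx, rfl⟩ (hf x hx).2
      have hfin : (b ∩ u).Finite := by
        refine (Set.Finite.biUnion hTfin ?_).subset hcov
        intro m _
        exact (m.toFinset.finite_toSet).subset (fun x hx => Multiset.mem_toFinset.mpr hx)
      exact hinf hfin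
  have hE_sub : ∀ t ∈ predual (bangSet W) E, t ⊆ bangSet W := fun t ht => ht.1
  constructor
  · rw [key]
    exact predual_triple (bangSet W) hE_sub
  · exact key

end FinitenessPaper
end

section
/- A transport functor is exactly continuous as soon as its underlying web functor is continuous: let T be an I-ary functor in Rel that commutes with componentwise directed unions of sets and of relations, with ownership relation (own_i)_{i∈I} defining a transport functor T^own. For each i ∈ I let (𝒜_{i,j})_{j∈J_i} be a ⊑-directed family of finiteness spaces whose supremum ⊔_j 𝒜_{i,j} is exact. Then T^own((⊔_j 𝒜_{i,j})_{i∈I}) equals the ⊑-supremum over multi-indices (j_i)_{i∈I} ∈ Π_i J_i of T^own((𝒜_{i,j_i})_{i∈I}), and this supremum is exact. -/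
open Set

namespace FinitenessPaper

/-- Finiteness inclusion order. -/
def fsLE {α : Type*} (A B : FinSpace α) : Prop := A.web ⊆ B.web ∧ A.fin ⊆ B.fin

/-- Direct image of a set under a relation. -/
def rimage {α β : Type*} (f : Set (α × β)) (a : Set α) : Set β := {y | ∃ x ∈ a, (x, y) ∈ f}

/-- Reverse relation. -/
def rrev {α β : Type*} (f : Set (α × β)) : Set (β × α) := {p | (p.2, p.1) ∈ f}

/-- Composition of relations. -/
def rcomp {α β γ : Type*} (g : Set (β × γ)) (f : Set (α × β)) : Set (α × γ) :=
  {p | ∃ b, (p.1, b) ∈ f ∧ (b, p.2) ∈ g}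

/-- Identity relation on a set. -/
def rid {α : Type*} (A : Set α) : Set (α × α) := {p | p.1 ∈ A ∧ p.1 = p.2}

/-- A relation is finitary between two (webs with) finiteness structures. -/
def FinitaryRel {α β : Type*} (Aw : Set α) (AF : Set (Set α)) (Bw : Set β)
    (BF : Set (Set β)) (f : Set (α × β)) : Prop :=
  (∀ a ∈ AF, rimage f a ∈ BF) ∧
  ∀ b' ∈ predual Bw BF, rimage (rrev f) b' ∈ predual Aw AF

lemma mem_predual {α : Type*} {A : Set α} {F : Set (Set α)} {b : Set α} :
    b ∈ predual A F ↔ b ⊆ A ∧ ∀ a ∈ F, (a ∩ b).Finite := Iff.rfl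

lemma predual_mono {α : Type*} {A : Set α} {F G : Set (Set α)} (h : F ⊆ G) :
    predual A G ⊆ predual A F := fun _ hb => ⟨hb.1, fun a ha => hb.2 a (h ha)⟩

lemma predual_downward {α : Type*} {A : Set α} {F : Set (Set α)} {b b' : Set α}
    (hb : b ∈ predual A F) (h : b' ⊆ b) : b' ∈ predual A F :=
  ⟨h.trans hb.1, fun a ha => ((hb.2 a ha).subset (by intro x hx; exact ⟨hx.1, h hx.2⟩))⟩

lemma finite_mem_predual {α : Type*} {A : Set α} {F : Set (Set α)} {b : Set α}
    (hbA : b ⊆ A) (hb : b.Finite) : b ∈ predual A F :=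
  ⟨hbA, fun a _ => hb.subset inter_subset_right⟩

lemma subset_bidual {α : Type*} {A : Set α} {F : Set (Set α)}
    (h : ∀ a ∈ F, a ⊆ A) : F ⊆ predual A (predual A F) := by
  intro a ha
  exact ⟨h a ha, fun b hb => by
    have := hb.2 a ha
    exact this.subset (by intro x hx; exact ⟨hx.2, hx.1⟩)⟩

lemma FinSpace.fin_subset_web {α : Type*} (S : FinSpace α) {a : Set α} (ha : a ∈ S.fin) :
    a ⊆ S.web := by
  rw [← S.isFin] at ha; exact ha.1

lemma FinSpace.downward {α : Type*} (S : FinSpace α) {a b : Set α} (ha : a ∈ S.fin)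
    (hb : b ⊆ a) : b ∈ S.fin := by
  rw [← S.isFin] at ha ⊢
  exact predual_downward ha hb

lemma FinSpace.finite_mem {α : Type*} (S : FinSpace α) {b : Set α} (hbw : b ⊆ S.web)
    (hb : b.Finite) : b ∈ S.fin := by
  rw [← S.isFin]; exact finite_mem_predual hbw hb

lemma rimage_mono {α β : Type*} {f g : Set (α × β)} {a b : Set α} (hfg : f ⊆ g)
    (hab : a ⊆ b) : rimage f a ⊆ rimage g b := by
  rintro y ⟨x, hx, hxy⟩; exact ⟨x, hab hx, hfg hxy⟩

lemma mem_rimage_singleton {α β : Type*} {f : Set (α × β)} {x : α} {y : β} :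
    y ∈ rimage f {x} ↔ (x, y) ∈ f := by
  constructor
  · rintro ⟨x', hx', h⟩; cases hx'; exact h
  · intro h; exact ⟨x, rfl, h⟩


lemma FinSpace.union_mem {α : Type*} (S : FinSpace α) {a b : Set α} (ha : a ∈ S.fin)
    (hb : b ∈ S.fin) : a ∪ b ∈ S.fin := by
  rw [← S.isFin] at ha hb ⊢
  refine ⟨union_subset ha.1 hb.1, fun c hc => ?_⟩
  have : (a ∪ b) ∩ c ⊆ (a ∩ c) ∪ (b ∩ c) := by
    rintro x ⟨hx1 | hx1, hx2⟩
    · exact Or.inl ⟨hx1, hx2⟩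
    · exact Or.inr ⟨hx1, hx2⟩
  exact ((ha.2 c hc).union (hb.2 c hc)).subset (by
    intro x hx
    rcases this (by exact ⟨hx.2, hx.1⟩) with h | h
    · exact Or.inl ⟨h.2, h.1⟩
    · exact Or.inr ⟨h.2, h.1⟩)

/-- The co-support finiteness structure on `W` relative to `u`. -/
lemma cosupport_isFin {α : Type*} (Wb u : Set α) (hu : u ⊆ Wb) :
    predual Wb (predual Wb {d | d ⊆ Wb ∧ (d \ u).Finite}) = {d | d ⊆ Wb ∧ (d \ u).Finite} := by
  have hpred : predual Wb {d | d ⊆ Wb ∧ (d \ u).Finite} = {b | b ⊆ Wb ∧ (b ∩ u).Finite} := by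
    ext b
    constructor
    · intro hb
      refine ⟨hb.1, ?_⟩
      have := hb.2 u ⟨hu, by simp⟩
      exact this.subset (by intro x hx; exact ⟨hx.2, hx.1⟩)
    · rintro ⟨hbW, hbu⟩
      refine ⟨hbW, fun d hd => ?_⟩
      have : d ∩ b ⊆ (d \ u) ∪ (u ∩ b) := by
        rintro x ⟨hxd, hxb⟩
        by_cases hxu : x ∈ u
        · exact Or.inr ⟨hxu, hxb⟩
        · exact Or.inl ⟨hxd, hxu⟩
      exact (hd.2.union (hbu.subset (by intro x hx; exact ⟨hx.2, hx.1⟩))).subset this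
  rw [hpred]
  ext d
  constructor
  · intro hd
    refine ⟨hd.1, ?_⟩
    have hmem : (d \ u) ∈ {b | b ⊆ Wb ∧ (b ∩ u).Finite} := by
      refine ⟨(diff_subset).trans hd.1, ?_⟩
      have : (d \ u) ∩ u = ∅ := by
        ext x; simp only [mem_inter_iff, mem_diff, mem_empty_iff_false, iff_false]
        rintro ⟨⟨_, h1⟩, h2⟩; exact h1 h2
      rw [this]; exact finite_empty
    have := hd.2 _ hmem
    exact this.subset (by intro x hx; exact ⟨hx, hx.1⟩)
  · rintro ⟨hdW, hdu⟩
    refine ⟨hdW, fun b hb => ?_⟩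
    have : b ∩ d ⊆ (d \ u) ∪ (b ∩ u) := by
      rintro x ⟨hxb, hxd⟩
      by_cases hxu : x ∈ u
      · exact Or.inr ⟨hxb, hxu⟩
      · exact Or.inl ⟨hxd, hxu⟩
    exact (hdu.union hb.2).subset this


lemma rrev_rrev {α β : Type*} (f : Set (α × β)) : rrev (rrev f) = f := rfl

lemma card_embed {α : Type*} {M N : Set α} (hM : M.Infinite) (hNM : N ⊆ M) :
    ∃ g : ℕ → α → α, (∀ t γ, γ ∈ N → g t γ ∈ M) ∧
      (∀ t γ t' γ', γ ∈ N → γ' ∈ N → g t γ = g t' γ' → γ = γ' ∧ t = t') := by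
  haveI : Infinite ↥M := hM.to_subtype
  have h1 : Cardinal.mk ↥N ≤ Cardinal.mk ↥M := Cardinal.mk_le_mk_of_subset hNM
  have h2 : Cardinal.aleph0 ≤ Cardinal.mk ↥M := Cardinal.aleph0_le_mk ↥M
  have h3 : Cardinal.mk (↥N × ℕ) ≤ Cardinal.mk ↥M := by
    rw [Cardinal.mk_prod]
    simp only [Cardinal.mk_nat, Cardinal.lift_id', Cardinal.lift_aleph0, Cardinal.lift_uzero]
    calc Cardinal.mk ↥N * Cardinal.aleph0 ≤ Cardinal.mk ↥M * Cardinal.mk ↥M :=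
          mul_le_mul' h1 h2
      _ = Cardinal.mk ↥M := Cardinal.mul_eq_self h2
  obtain ⟨emb⟩ := Cardinal.le_def _ _ |>.1 h3
  classical
  refine ⟨fun t γ => if h : γ ∈ N then (emb (⟨γ, h⟩, t) : α) else γ, ?_, ?_⟩
  · intro t γ hγ
    simp only [dif_pos hγ]
    exact (emb (⟨γ, hγ⟩, t)).2
  · intro t γ t' γ' hγ hγ' heq
    simp only [dif_pos hγ, dif_pos hγ'] at heq
    have h4 := emb.injective (Subtype.ext heq)
    exact ⟨congrArg Subtype.val (congrArg Prod.fst h4), congrArg Prod.snd h4⟩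

/-- A transport functor is exactly continuous as soon as its underlying web
functor is continuous: given componentwise `⊑`-directed families of finiteness
spaces with exact suprema, the transport functor applied to the componentwise
suprema equals the supremum, over multi-indices, of its values, and this
supremum is exact. -/
theorem transport_functor_exactly_continuous
    {α β : Type*} {I : Type u} {J : I → Type v}
    (Tobj : (I → Set α) → Set β)
    (Tmap : (I → Set (α × α)) → Set (β × β))
    (hT_sub : ∀ (A B : I → Set α) (f : I → Set (α × α)),
      (∀ i, f i ⊆ A i ×ˢ B i) → Tmap f ⊆ Tobj A ×ˢ Tobj B)
    (hT_id : ∀ A : I → Set α, Tmap (fun i => rid (A i)) = rid (Tobj A))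
    (hT_comp : ∀ f g : I → Set (α × α),
      Tmap (fun i => rcomp (g i) (f i)) = rcomp (Tmap g) (Tmap f))
    -- continuity of the web functor: it commutes with componentwise directed
    -- unions of sets and of relations
    (hTobj_cont : ∀ {J' : I → Type v} (A : ∀ i, J' i → Set α),
      (∀ i, Directed (· ⊆ ·) (A i)) →
      Tobj (fun i => ⋃ j, A i j) = ⋃ j : ∀ i, J' i, Tobj fun i => A i (j i))
    (hTmap_cont : ∀ {J' : I → Type v} (g : ∀ i, J' i → Set (α × α)),
      (∀ i, Directed (· ⊆ ·) (g i)) →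
      Tmap (fun i => ⋃ j, g i j) = ⋃ j : ∀ i, J' i, Tmap fun i => g i (j i))
    (own : I → (I → Set α) → Set (β × α))
    (hown_sub : ∀ i (A : I → Set α), own i A ⊆ Tobj A ×ˢ A i)
    (hown_qf : ∀ i (A : I → Set α) (x : β), (rimage (own i A) {x}).Finite)
    (hown_lax : ∀ i (A B : I → Set α) (g : I → Set (α × α)),
      (∀ j, g j ⊆ A j ×ˢ B j) →
      rcomp (own i B) (Tmap g) ⊆ rcomp (g i) (own i A))
    -- the ownership relation defines a transport functor
    (htrans : ∀ (𝒜 ℬ : I → FinSpace α) (f : I → Set (α × α)),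
      (∀ i, f i ⊆ (𝒜 i).web ×ˢ (ℬ i).web) →
      (∀ i, FinitaryRel (𝒜 i).web (𝒜 i).fin (ℬ i).web (ℬ i).fin (f i)) →
      FinitaryRel (Tobj fun i => (𝒜 i).web)
        {s | s ⊆ (Tobj fun i => (𝒜 i).web) ∧
          ∀ i, rimage (own i fun j => (𝒜 j).web) s ∈ (𝒜 i).fin}
        (Tobj fun i => (ℬ i).web)
        {s | s ⊆ (Tobj fun i => (ℬ i).web) ∧
          ∀ i, rimage (own i fun j => (ℬ j).web) s ∈ (ℬ i).fin}
        (Tmap f))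
    -- componentwise directed families of finiteness spaces with exact suprema
    (𝒜 : ∀ i, J i → FinSpace α)
    (hdir : ∀ i, Directed fsLE (𝒜 i))
    (hexact : ∀ i, predual (⋃ j, (𝒜 i j).web)
        (predual (⋃ j, (𝒜 i j).web) (⋃ j, (𝒜 i j).fin)) = ⋃ j, (𝒜 i j).fin) :
    let W : (∀ i, J i) → I → Set α := fun j i => (𝒜 i (j i)).web
    let TF : (∀ i, J i) → Set (Set β) := fun j =>
      {s | s ⊆ Tobj (W j) ∧ ∀ i, rimage (own i (W j)) s ∈ (𝒜 i (j i)).fin}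
    let Wsup : I → Set α := fun i => ⋃ j, (𝒜 i j).web
    let Fsup : I → Set (Set α) := fun i =>
      predual (Wsup i) (predual (Wsup i) (⋃ j, (𝒜 i j).fin))
    let UW : Set β := ⋃ j : ∀ i, J i, Tobj (W j)
    -- the webs agree
    (Tobj Wsup = UW) ∧
    -- the finiteness structures agree
    ({s | s ⊆ Tobj Wsup ∧ ∀ i, rimage (own i Wsup) s ∈ Fsup i}
      = predual UW (predual UW (⋃ j : ∀ i, J i, TF j))) ∧
    -- and the supremum is exact
    (predual UW (predual UW (⋃ j : ∀ i, J i, TF j)) = ⋃ j : ∀ i, J i, TF j) := by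
  intro W TF Wsup Fsup UW
  -- webs are directed
  have hWdir : ∀ i, Directed (· ⊆ ·) (fun j => (𝒜 i j).web) := by
    intro i j k
    obtain ⟨m, hm1, hm2⟩ := hdir i j k
    exact ⟨m, hm1.1, hm2.1⟩
  -- claim 1
  have hclaim1 : Tobj Wsup = UW := hTobj_cont (fun i j => (𝒜 i j).web) hWdir
  -- monotonicity of Tobj
  have hmono : ∀ A B : I → Set α, (∀ i, A i ⊆ B i) → Tobj A ⊆ Tobj B := by
    intro A B hAB x hx
    have h1 : Tmap (fun i => rid (A i)) ⊆ Tobj A ×ˢ Tobj B := by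
      apply hT_sub
      intro i p hp
      exact ⟨hp.1, hAB i (hp.2 ▸ hp.1)⟩
    rw [hT_id] at h1
    have : (x, x) ∈ rid (Tobj A) := ⟨hx, rfl⟩
    exact (h1 this).2
  -- coherence of own across webs
  have hcoh : ∀ (A B : I → Set α), (∀ i, A i ⊆ B i) → ∀ i (x : β) (γ : α),
      x ∈ Tobj A → ((x, γ) ∈ own i A ↔ (x, γ) ∈ own i B) := by
    intro A B hAB i x γ hx
    constructor
    · intro h
      have hg : ∀ j, rid (A j) ⊆ B j ×ˢ A j := by
        intro j p hp; exact ⟨hAB j hp.1, hp.2 ▸ hp.1⟩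
      have hl := hown_lax i B A (fun j => rid (A j)) hg
      have hmem : (x, γ) ∈ rcomp (own i A) (Tmap (fun j => rid (A j))) := by
        rw [hT_id]
        exact ⟨x, ⟨hx, rfl⟩, h⟩
      obtain ⟨b, hb1, hb2⟩ := hl hmem
      have hbγ : b = γ := hb2.2
      exact hbγ ▸ hb1
    · intro h
      have hg : ∀ j, rid (A j) ⊆ A j ×ˢ B j := by
        intro j p hp; exact ⟨hp.1, hAB j (hp.2 ▸ hp.1)⟩
      have hl := hown_lax i A B (fun j => rid (A j)) hg
      have hmem : (x, γ) ∈ rcomp (own i B) (Tmap (fun j => rid (A j))) := by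
        rw [hT_id]
        exact ⟨x, ⟨hx, rfl⟩, h⟩
      obtain ⟨b, hb1, hb2⟩ := hl hmem
      have hbγ : b = γ := hb2.2
      exact hbγ ▸ hb1
  -- upper bounds in the directed product
  have hup : ∀ j k : (∀ i, J i), ∃ m : (∀ i, J i),
      (∀ i, fsLE (𝒜 i (j i)) (𝒜 i (m i))) ∧ (∀ i, fsLE (𝒜 i (k i)) (𝒜 i (m i))) := by
    intro j k
    have h : ∀ i, ∃ m, fsLE (𝒜 i (j i)) (𝒜 i m) ∧ fsLE (𝒜 i (k i)) (𝒜 i m) := by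
      intro i; exact hdir i (j i) (k i)
    choose m hm1 hm2 using h
    exact ⟨m, hm1, hm2⟩
  -- webs included in Wsup
  have hWsub : ∀ (j : ∀ i, J i) (i : I), W j i ⊆ Wsup i := by
    intro j i
    exact subset_iUnion (fun j' => (𝒜 i j').web) (j i)
  have hTobjW_sub : ∀ j : ∀ i, J i, Tobj (W j) ⊆ Tobj Wsup := fun j => hmono _ _ (hWsub j)
  -- own agreement on subwebs of Wsup
  have hagree : ∀ (A : I → Set α), (∀ i, A i ⊆ Wsup i) → ∀ (s : Set β), s ⊆ Tobj A →
      ∀ i, rimage (own i Wsup) s = rimage (own i A) s := by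
    intro A hA s hs i
    ext γ
    constructor
    · rintro ⟨x, hx, hxγ⟩
      exact ⟨x, hx, (hcoh A Wsup hA i x γ (hs hx)).2 hxγ⟩
    · rintro ⟨x, hx, hxγ⟩
      exact ⟨x, hx, (hcoh A Wsup hA i x γ (hs hx)).1 hxγ⟩
  -- every fin-member is a subset of Wsup
  have hfin_subWsup : ∀ (i : I) (j : J i) (a : Set α), a ∈ (𝒜 i j).fin → a ⊆ Wsup i := by
    intro i j a ha
    exact ((𝒜 i j).fin_subset_web ha).trans (subset_iUnion (fun j' => (𝒜 i j').web) j)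
  -- union of fins is included in Fsup
  have hUfin_sub : ∀ i, (⋃ j, (𝒜 i j).fin) ⊆ Fsup i := by
    intro i
    apply subset_bidual
    intro a ha
    obtain ⟨j, hj⟩ := mem_iUnion.1 ha
    exact hfin_subWsup i j a hj
  -- TF monotone along fsLE
  have hTFmono : ∀ (j m : ∀ i, J i), (∀ i, fsLE (𝒜 i (j i)) (𝒜 i (m i))) →
      TF j ⊆ TF m := by
    intro j m hjm s hs
    have hsub : s ⊆ Tobj (W m) := hs.1.trans (hmono _ _ (fun i => (hjm i).1))
    refine ⟨hsub, fun i => ?_⟩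
    have h1 : rimage (own i (W m)) s = rimage (own i (W j)) s := by
      ext γ; constructor
      · rintro ⟨x, hx, hxγ⟩
        exact ⟨x, hx, (hcoh (W j) (W m) (fun i' => (hjm i').1) i x γ (hs.1 hx)).2 hxγ⟩
      · rintro ⟨x, hx, hxγ⟩
        exact ⟨x, hx, (hcoh (W j) (W m) (fun i' => (hjm i').1) i x γ (hs.1 hx)).1 hxγ⟩
    rw [h1]
    exact (hjm i).2 (hs.2 i)
  -- L1 : ⋃ TF ⊆ transport structure of the sup
  have hL1 : (⋃ j : ∀ i, J i, TF j) ⊆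
      {s | s ⊆ Tobj Wsup ∧ ∀ i, rimage (own i Wsup) s ∈ Fsup i} := by
    intro s hs
    obtain ⟨j, hj⟩ := mem_iUnion.1 hs
    refine ⟨hj.1.trans (hTobjW_sub j), fun i => ?_⟩
    rw [hagree (W j) (hWsub j) s hj.1 i]
    exact hUfin_sub i (mem_iUnion.2 ⟨j i, hj.2 i⟩)
  -- members of TF are subsets of UW
  have hTF_subUW : ∀ s ∈ (⋃ j : ∀ i, J i, TF j), s ⊆ UW := by
    intro s hs
    obtain ⟨j, hj⟩ := mem_iUnion.1 hs
    exact hj.1.trans (subset_iUnion (fun j' => Tobj (W j')) j)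
  -- L2
  have hL2 : (⋃ j : ∀ i, J i, TF j) ⊆ predual UW (predual UW (⋃ j : ∀ i, J i, TF j)) :=
    subset_bidual hTF_subUW
  -- L3 : the bidual of ⋃ TF is contained in the transport structure of the sup
  have hL3 : predual UW (predual UW (⋃ j : ∀ i, J i, TF j)) ⊆
      {s | s ⊆ Tobj Wsup ∧ ∀ i, rimage (own i Wsup) s ∈ Fsup i} := by
    intro t ht
    have htUW : t ⊆ Tobj Wsup := hclaim1 ▸ ht.1
    refine ⟨htUW, fun i => ?_⟩
    refine ⟨?_, ?_⟩
    · rintro γ ⟨x, hx, hxγ⟩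
      exact (hown_sub i Wsup hxγ).2
    · intro b' hb'
      set D : Set α := b' ∩ rimage (own i Wsup) t with hD
      rcases D.eq_empty_or_nonempty with hDe | hDne
      · rw [hDe]; exact finite_empty
      have hwit : ∀ γ ∈ D, ∃ x, x ∈ t ∧ (x, γ) ∈ own i Wsup := by
        rintro γ ⟨_, ⟨x, hx, hxγ⟩⟩
        exact ⟨x, hx, hxγ⟩
      obtain ⟨γ₀, hγ₀⟩ := hDne
      obtain ⟨x₀, hx₀t, -⟩ := hwit γ₀ hγ₀
      have hwit' : ∀ γ : α, ∃ x, (γ ∈ D → (x ∈ t ∧ (x, γ) ∈ own i Wsup)) := by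
        intro γ
        by_cases h : γ ∈ D
        · obtain ⟨x, hx⟩ := hwit γ h; exact ⟨x, fun _ => hx⟩
        · exact ⟨x₀, fun h' => absurd h' h⟩
      choose wit hwitp using hwit'
      have hwit1 : ∀ γ ∈ D, wit γ ∈ t := fun γ hγ => (hwitp γ hγ).1
      have hwit2 : ∀ γ ∈ D, (wit γ, γ) ∈ own i Wsup := fun γ hγ => (hwitp γ hγ).2
      set T0 : Set β := wit '' D with hT0
      have hT0t : T0 ⊆ t := by rintro x ⟨γ, hγ, rfl⟩; exact hwit1 γ hγ
      have hT0pred : T0 ∈ predual UW (⋃ j : ∀ i, J i, TF j) := by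
        refine ⟨hT0t.trans ht.1, ?_⟩
        intro s hs
        obtain ⟨j, hj⟩ := mem_iUnion.1 hs
        have hkey : s ∩ T0 ⊆ wit '' {γ ∈ D | γ ∈ rimage (own i (W j)) s} := by
          rintro x ⟨hxs, γ, hγ, rfl⟩
          refine mem_image_of_mem wit ⟨hγ, ?_⟩
          exact ⟨wit γ, hxs, (hcoh (W j) Wsup (hWsub j) i (wit γ) γ (hj.1 hxs)).2 (hwit2 γ hγ)⟩
        have hfin : {γ ∈ D | γ ∈ rimage (own i (W j)) s}.Finite := by
          have hss : {γ ∈ D | γ ∈ rimage (own i (W j)) s} ⊆ (rimage (own i (W j)) s) ∩ b' := by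
            rintro γ ⟨⟨hγb, _⟩, hγs⟩
            exact ⟨hγs, hγb⟩
          exact (hb'.2 _ (mem_iUnion.2 ⟨j i, hj.2 i⟩)).subset hss
        exact (hfin.image wit).subset hkey
      have hT0fin : T0.Finite := by
        have h1 := ht.2 T0 hT0pred
        rwa [inter_eq_self_of_subset_left hT0t] at h1
      have hDfin : D.Finite := by
        have hsub : D ⊆ ⋃ x ∈ T0, rimage (own i Wsup) {x} := by
          intro γ hγ
          exact mem_biUnion (mem_image_of_mem wit hγ) (mem_rimage_singleton.2 (hwit2 γ hγ))
        exact (hT0fin.biUnion (fun x _ => hown_qf i Wsup x)).subset hsub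
      exact hDfin
  -- monotonicity of Tmap (from continuity over a two-stage directed family)
  have hTmap_mono : ∀ f g : I → Set (α × α), (∀ i, f i ⊆ g i) → Tmap f ⊆ Tmap g := by
    intro f g hfg
    have hdir2 : ∀ i, Directed (· ⊆ ·) (fun b : ULift.{v} Bool => if b.down then g i else f i) := by
      intro i b c
      refine ⟨⟨true⟩, ?_, ?_⟩
      · rcases b with ⟨b0⟩
        cases b0
        · simpa using hfg i
        · simp
      · rcases c with ⟨c0⟩
        cases c0
        · simpa using hfg i
        · simp
    have h := hTmap_cont (fun i (b : ULift.{v} Bool) => if b.down then g i else f i) hdir2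
    have hg : (fun i => ⋃ b : ULift.{v} Bool, if b.down then g i else f i) = g := by
      funext i
      apply Subset.antisymm
      · intro p hp
        obtain ⟨S, ⟨b, rfl⟩, hpS⟩ := hp
        rcases b with ⟨b0⟩
        cases b0
        · exact hfg i (by simpa using hpS)
        · simpa using hpS
      · intro p hp
        exact mem_iUnion.2 ⟨⟨true⟩, by simpa using hp⟩
    rw [hg] at h
    rw [h]
    intro p hp
    refine mem_iUnion.2 ⟨fun _ => ⟨false⟩, ?_⟩
    simpa using hp
  -- rid determines the set
  have hrid_eq : ∀ S S' : Set β, rid S = rid S' → S = S' := by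
    intro S S' h
    ext x
    constructor
    · intro hx
      have : (x, x) ∈ rid S := ⟨hx, rfl⟩
      rw [h] at this; exact this.1
    · intro hx
      have : (x, x) ∈ rid S' := ⟨hx, rfl⟩
      rw [← h] at this; exact this.1
  -- Tobj preserves binary intersections
  have hmeet : ∀ A B : I → Set α, Tobj (fun i => A i ∩ B i) = Tobj A ∩ Tobj B := by
    intro A B
    have h := hT_comp (fun i => rid (A i)) (fun i => rid (B i))
    have e1 : (fun i => rcomp (rid (B i)) (rid (A i))) = fun i => rid (A i ∩ B i) := by
      funext i
      ext p
      constructor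
      · rintro ⟨b, ⟨hb1, hb2⟩, hb3, hb4⟩
        exact ⟨⟨hb1, hb2 ▸ hb3⟩, hb2.trans hb4⟩
      · rintro ⟨⟨h1, h2⟩, h3⟩
        exact ⟨p.1, ⟨h1, rfl⟩, h2, h3⟩
    rw [e1, hT_id, hT_id, hT_id] at h
    have e2 : rcomp (rid (Tobj B)) (rid (Tobj A)) = rid (Tobj A ∩ Tobj B) := by
      ext p
      constructor
      · rintro ⟨b, ⟨hb1, hb2⟩, hb3, hb4⟩
        exact ⟨⟨hb1, hb2 ▸ hb3⟩, hb2.trans hb4⟩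
      · rintro ⟨⟨h1, h2⟩, h3⟩
        exact ⟨p.1, ⟨h1, rfl⟩, h2, h3⟩
    rw [e2] at h
    exact hrid_eq _ _ h
  -- forced total functional action of (injective-ish) function graphs
  have hfun : ∀ (A R : I → Set α) (r : I → Set (α × α)),
      (∀ i, rcomp (r i) (rrev (r i)) ⊆ rid (R i)) →
      (∀ i, rid (A i) ⊆ rcomp (rrev (r i)) (r i)) →
      (∀ x ∈ Tobj A, ∃ z, (x, z) ∈ Tmap r ∧ (z, x) ∈ Tmap (fun i => rrev (r i))) ∧
      (∀ x z z', (x, z) ∈ Tmap r → (z, x) ∈ Tmap (fun i => rrev (r i)) →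
        (x, z') ∈ Tmap r → z' = z) := by
    intro A R r hffun htot
    constructor
    · intro x hx
      have h1 : Tmap (fun i => rid (A i)) ⊆
          Tmap (fun i => rcomp (rrev (r i)) (r i)) := hTmap_mono _ _ htot
      rw [hT_id, hT_comp r (fun i => rrev (r i))] at h1
      have h2 : (x, x) ∈ rid (Tobj A) := ⟨hx, rfl⟩
      obtain ⟨z, hz1, hz2⟩ := h1 h2
      exact ⟨z, hz1, hz2⟩
    · intro x z z' h1 h2 h3
      have h4 : (z, z') ∈ rcomp (Tmap r) (Tmap (fun i => rrev (r i))) := ⟨x, h2, h3⟩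
      rw [← hT_comp (fun i => rrev (r i)) r] at h4
      have h5 : Tmap (fun i => rcomp (r i) (rrev (r i))) ⊆ Tmap (fun i => rid (R i)) :=
        hTmap_mono _ _ hffun
      rw [hT_id] at h5
      exact ((h5 h4).2).symm
  -- every J i is nonempty
  have hJne : ∀ i, Nonempty (J i) := by
    intro i
    have h1 : (∅ : Set α) ∈ ⋃ j, (𝒜 i j).fin := by
      rw [← hexact i]
      exact finite_mem_predual (empty_subset _) finite_empty
    obtain ⟨j, _⟩ := mem_iUnion.1 h1
    exact ⟨j⟩
  -- every finite subset of Wsup i is contained in a single web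
  have hfinweb : ∀ i (F : Set α), F.Finite → F ⊆ Wsup i → ∃ j : J i, F ⊆ (𝒜 i j).web := by
    intro i F hF
    refine Set.Finite.induction_on (motive := fun F _ => F ⊆ Wsup i → ∃ j : J i, F ⊆ (𝒜 i j).web) F hF ?_ ?_
    · intro _
      obtain ⟨j⟩ := hJne i
      exact ⟨j, empty_subset _⟩
    · intro γ F' _ _ ih hins
      have h1 : F' ⊆ Wsup i := (subset_insert _ _).trans hins
      obtain ⟨j1', hj1'⟩ := ih h1
      have h2 : γ ∈ Wsup i := hins (mem_insert _ _)
      obtain ⟨j2', hj2'⟩ := mem_iUnion.1 h2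
      obtain ⟨j3', h31, h32⟩ := hdir i j1' j2'
      exact ⟨j3', insert_subset_iff.2 ⟨h32.1 hj2', hj1'.trans h31.1⟩⟩
  -- the support/covering lemma for webs (kernel)
  have hsupport : ∀ s : Set β, s ⊆ Tobj Wsup →
      (∀ i, ∃ j : J i, rimage (own i Wsup) s ∈ (𝒜 i j).fin) →
      ∃ j : ∀ i, J i, s ⊆ Tobj (W j) := by
    intro s hssub hsown
    by_cases hne : ∀ i, (Wsup i).Nonempty
    swap
    · -- some component web is empty : Tobj Wsup = ∅ by strictness
      push_neg at hne
      obtain ⟨i₀, hi₀⟩ := hne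
      have hempty : Tobj Wsup = ∅ := by
        have hdirJ' : ∀ i, Directed (· ⊆ ·)
            (fun _ : ULift.{v} (PLift (i ≠ i₀)) => Wsup i) :=
          fun i x _ => ⟨x, subset_rfl, subset_rfl⟩
        have h := hTobj_cont (fun i (_ : ULift.{v} (PLift (i ≠ i₀))) => Wsup i) hdirJ'
        have e1 : (fun i => ⋃ _ : ULift.{v} (PLift (i ≠ i₀)), Wsup i) = Wsup := by
          funext i
          by_cases hii : i = i₀
          · subst hii
            haveI : IsEmpty (ULift.{v} (PLift (i ≠ i))) := ⟨fun j => j.down.down rfl⟩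
            rw [iUnion_of_empty, hi₀]
          · haveI : Nonempty (ULift.{v} (PLift (i ≠ i₀))) := ⟨⟨⟨hii⟩⟩⟩
            exact iUnion_const _
        haveI : IsEmpty (∀ i, ULift.{v} (PLift (i ≠ i₀))) := ⟨fun j => (j i₀).down.down rfl⟩
        rw [e1, iUnion_of_empty] at h
        exact h
      refine ⟨fun i => (hJne i).some, fun x hx => ?_⟩
      exact absurd (hempty ▸ hssub hx) (by simp)
    · -- main case: all component webs nonempty
      choose j0 hj0 using hsown
      have hqex : ∀ i, ∃ jq : J i, ∃ q : α, q ∈ (𝒜 i jq).web := by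
        intro i
        obtain ⟨γ, hγ⟩ := hne i
        obtain ⟨jq, h⟩ := mem_iUnion.1 hγ
        exact ⟨jq, γ, h⟩
      choose jq qb hqb using hqex
      choose j1 hj11 hj12 using fun i => hdir i (j0 i) (jq i)
      -- the finitary support v = û
      set v : I → Set α := fun i => rimage (own i Wsup) s ∪ {qb i} with hv
      have hvfin : ∀ i, v i ∈ (𝒜 i (j1 i)).fin := by
        intro i
        refine (𝒜 i (j1 i)).union_mem ((hj11 i).2 (hj0 i)) ?_
        exact (𝒜 i (j1 i)).finite_mem
          (singleton_subset_iff.2 ((hj12 i).1 (hqb i))) (finite_singleton _)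
      have hvweb : ∀ i, v i ⊆ (𝒜 i (j1 i)).web :=
        fun i => (𝒜 i (j1 i)).fin_subset_web (hvfin i)
      have hvW : ∀ i, v i ⊆ Wsup i :=
        fun i => (hvweb i).trans (subset_iUnion (fun j => (𝒜 i j).web) (j1 i))
      -- the target index j3 and trichotomy data
      have hj3ex : ∀ i, ∃ j3 : J i, fsLE (𝒜 i (j1 i)) (𝒜 i j3) ∧
          ((Wsup i \ v i).Finite → Wsup i ⊆ (𝒜 i j3).web) := by
        intro i
        by_cases hP : (Wsup i \ v i).Finite
        · obtain ⟨jF, hjF⟩ := hfinweb i _ hP diff_subset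
          obtain ⟨j3, h31, h32⟩ := hdir i (j1 i) jF
          refine ⟨j3, h31, fun _ γ hγ => ?_⟩
          by_cases hγv : γ ∈ v i
          · exact h31.1 (hvweb i hγv)
          · exact h32.1 (hjF ⟨hγ, hγv⟩)
        · exact ⟨j1 i, ⟨subset_rfl, subset_rfl⟩, fun h => absurd h hP⟩
      choose j3 hj31 hj32 using hj3ex
      -- the injection families e
      have heex : ∀ i, ∃ e : ℕ → α → α,
          ¬(Wsup i \ v i).Finite →
          ((∀ t γ, γ ∈ Wsup i \ v i → e t γ ∈ Wsup i \ v i) ∧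
           (∀ t γ t' γ', γ ∈ Wsup i \ v i → γ' ∈ Wsup i \ v i →
             e t γ = e t' γ' → γ = γ' ∧ t = t')) := by
        intro i
        by_cases hP : (Wsup i \ v i).Finite
        · exact ⟨fun _ γ => γ, fun h => absurd hP h⟩
        · obtain ⟨e, he1, he2⟩ := card_embed (M := Wsup i \ v i) (N := Wsup i \ v i)
            hP subset_rfl
          exact ⟨e, fun _ => ⟨he1, he2⟩⟩
      choose e hee using heex
      refine ⟨j3, fun x hx => ?_⟩
      -- a pool above j3 containing x
      have hx1 : x ∈ UW := hclaim1 ▸ hssub hx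
      obtain ⟨k₀, hk₀⟩ := mem_iUnion.1 hx1
      obtain ⟨k, hk1, hk2⟩ := hup k₀ j3
      have hxA : x ∈ Tobj (W k) := hmono _ _ (fun i => (hk1 i).1) hk₀
      have hvA : ∀ i, v i ⊆ W k i :=
        fun i => (hvweb i).trans ((hj31 i).1.trans (hk2 i).1)
      have hAW : ∀ i, W k i ⊆ Wsup i := hWsub k
      classical
      -- the fixed parts D and the moving injections ρ
      set D : I → Set α := fun i => if (Wsup i \ v i).Finite then W k i else v i with hDdef
      have hvD : ∀ i, v i ⊆ D i := by
        intro i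
        by_cases hP : (Wsup i \ v i).Finite <;> simp only [hDdef, hP, if_true, if_false]
        · exact hvA i
        · exact subset_rfl
      have hDA : ∀ i, D i ⊆ W k i := by
        intro i
        by_cases hP : (Wsup i \ v i).Finite <;> simp only [hDdef, hP, if_true, if_false]
        · exact subset_rfl
        · exact hvA i
      have hAD : ∀ i γ, γ ∈ W k i \ D i →
          ¬(Wsup i \ v i).Finite ∧ γ ∈ Wsup i \ v i := by
        intro i γ hγ
        by_cases hP : (Wsup i \ v i).Finite
        · exfalso
          have : D i = W k i := by simp only [hDdef, hP, if_true]
          exact hγ.2 (this ▸ hγ.1)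
        · have hDv : D i = v i := by simp only [hDdef, hP, if_false]
          exact ⟨hP, ⟨hAW i hγ.1, fun hh => hγ.2 (hDv ▸ hh)⟩⟩
      set ρ : ℕ → I → Set (α × α) := fun t i =>
        rid (D i) ∪ {p | p.1 ∈ W k i \ D i ∧ p.2 = e i t p.1} with hρdef
      set Rim : ℕ → I → Set α := fun t i =>
        D i ∪ {δ | ∃ γ, γ ∈ W k i \ D i ∧ δ = e i t γ} with hRimdef
      -- basic facts about ρ
      have hρsub : ∀ t i, ρ t i ⊆ W k i ×ˢ Rim t i := by
        rintro t i ⟨γ, δ⟩ (⟨h1, h2⟩ | ⟨h1, h2⟩)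
        · exact ⟨hDA i h1, Or.inl (h2 ▸ h1)⟩
        · exact ⟨h1.1, Or.inr ⟨γ, h1, h2⟩⟩
      have hRimW : ∀ t i, Rim t i ⊆ Wsup i := by
        rintro t i δ (h | ⟨γ, hγ, rfl⟩)
        · exact hAW i (hDA i h)
        · exact ((hee i (hAD i γ hγ).1).1 t γ (hAD i γ hγ).2).1
      have hρsubW : ∀ t i, ρ t i ⊆ W k i ×ˢ Wsup i :=
        fun t i p hp => ⟨(hρsub t i hp).1, hRimW t i (hρsub t i hp).2⟩
      -- functionality and totality data for ρ t
      have hρfun : ∀ t i, rcomp (ρ t i) (rrev (ρ t i)) ⊆ rid (Rim t i) := by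
        rintro t i ⟨ε, δ⟩ ⟨γ, hγε, hγδ⟩
        rcases hγε with (⟨h1, h2⟩ | ⟨h1, h2⟩) <;> rcases hγδ with (⟨h3, h4⟩ | ⟨h3, h4⟩)
        · refine ⟨Or.inl ?_, (show γ = ε from h2).symm.trans (show γ = δ from h4)⟩
          rw [← show γ = ε from h2]; exact h1
        · exact absurd h1 h3.2
        · exact absurd h3 h1.2
        · exact ⟨Or.inr ⟨γ, h1, h2⟩,
            (show ε = e i t γ from h2).trans (show δ = e i t γ from h4).symm⟩
      have hρtot : ∀ t i, rid (W k i) ⊆ rcomp (rrev (ρ t i)) (ρ t i) := by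
        rintro t i ⟨γ, γ'⟩ ⟨h1, h2⟩
        by_cases hγD : γ ∈ D i
        · exact ⟨γ, Or.inl ⟨hγD, rfl⟩, h2 ▸ Or.inl ⟨hγD, rfl⟩⟩
        · exact ⟨e i t γ, Or.inr ⟨⟨h1, hγD⟩, rfl⟩, h2 ▸ Or.inr ⟨⟨h1, hγD⟩, rfl⟩⟩
      have hρTF := fun t => hfun (W k) (Rim t) (ρ t) (hρfun t) (hρtot t)
      have hzex : ∀ t : ℕ, ∃ z, (x, z) ∈ Tmap (ρ t) ∧
          (z, x) ∈ Tmap (fun i => rrev (ρ t i)) := fun t => (hρTF t).1 x hxA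
      choose z hz1 hz2 using hzex
      -- the collapse map c onto v
      set c : I → Set (α × α) := fun i =>
        rid (v i) ∪ ((Wsup i \ v i) ×ˢ {qb i}) with hcdef
      have hqv : ∀ i, qb i ∈ v i := fun i => Or.inr rfl
      have hcfun : ∀ i, rcomp (c i) (rrev (c i)) ⊆ rid (v i) := by
        rintro i ⟨ε, δ⟩ ⟨γ, hγε, hγδ⟩
        rcases hγε with (⟨h1, h2⟩ | ⟨h1, h2⟩) <;> rcases hγδ with (⟨h3, h4⟩ | ⟨h3, h4⟩)
        · refine ⟨?_, (show γ = ε from h2).symm.trans (show γ = δ from h4)⟩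
          rw [← show γ = ε from h2]; exact h1
        · exact absurd h1 h3.2
        · exact absurd h3 h1.2
        · refine ⟨?_, (show ε = qb i from h2).trans (show δ = qb i from h4).symm⟩
          rw [show ε = qb i from h2]; exact hqv i
      have hctot : ∀ i, rid (Wsup i) ⊆ rcomp (rrev (c i)) (c i) := by
        rintro i ⟨γ, γ'⟩ ⟨h1, h2⟩
        by_cases hγv : γ ∈ v i
        · exact ⟨γ, Or.inl ⟨hγv, rfl⟩, h2 ▸ Or.inl ⟨hγv, rfl⟩⟩
        · exact ⟨qb i, Or.inr ⟨⟨h1, hγv⟩, rfl⟩, h2 ▸ Or.inr ⟨⟨h1, hγv⟩, rfl⟩⟩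
      have hcTF := hfun Wsup v c hcfun hctot
      obtain ⟨Φx, hΦ1, hΦ2⟩ := hcTF.1 x (hssub hx)
      -- all the z t lie in the collapse fibre of x
      have hcomp : ∀ t : ℕ, (fun i => rcomp (c i) (ρ t i)) =
          (fun i => rcomp (c i) (rid (W k i))) := by
        intro t
        funext i
        ext ⟨γ, δ⟩
        constructor
        · rintro ⟨m, hm1, hm2⟩
          rcases hm1 with (⟨h1, h2⟩ | ⟨h1, h2⟩)
          · refine ⟨γ, ⟨hDA i h1, rfl⟩, ?_⟩
            rw [show γ = m from h2]; exact hm2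
          · obtain ⟨hnP, hγWv⟩ := hAD i γ h1
            have hm : m ∈ Wsup i \ v i := by
              rw [show m = e i t γ from h2]; exact (hee i hnP).1 t γ hγWv
            rcases hm2 with (⟨h3, _⟩ | ⟨_, h4⟩)
            · exact absurd h3 hm.2
            · exact ⟨γ, ⟨h1.1, rfl⟩, Or.inr ⟨hγWv, h4⟩⟩
        · rintro ⟨m, ⟨hm1, hm2⟩, hm3⟩
          rw [← show γ = m from hm2] at hm3
          by_cases hγD : γ ∈ D i
          · exact ⟨γ, Or.inl ⟨hγD, rfl⟩, hm3⟩
          · obtain ⟨hnP, hγWv⟩ := hAD i γ ⟨hm1, hγD⟩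
            rcases hm3 with (⟨h3, _⟩ | ⟨_, h4⟩)
            · exact absurd h3 hγWv.2
            · exact ⟨e i t γ, Or.inr ⟨⟨hm1, hγD⟩, rfl⟩,
                Or.inr ⟨(hee i hnP).1 t γ hγWv, h4⟩⟩
      have hzc : ∀ t : ℕ, (z t, Φx) ∈ Tmap c := by
        intro t
        have h1 : (x, Φx) ∈ rcomp (Tmap c) (rid (Tobj (W k))) := ⟨x, ⟨hxA, rfl⟩, hΦ1⟩
        have h2 : rcomp (Tmap c) (Tmap (ρ t)) = rcomp (Tmap c) (rid (Tobj (W k))) := by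
          rw [← hT_comp (ρ t) c, hcomp t, hT_comp (fun i => rid (W k i)) c, hT_id]
        rw [← h2] at h1
        obtain ⟨m, hm1, hm2⟩ := h1
        have h3 : m = z t := (hρTF t).2 x (z t) m (hz1 t) (hz2 t) hm1
        exact h3 ▸ hm2
      -- the co-support finiteness spaces and the fibre finiteness
      have hXfs : ∀ i, predual (Wsup i)
          (predual (Wsup i) {d | d ⊆ Wsup i ∧ (d \ v i).Finite}) =
          {d | d ⊆ Wsup i ∧ (d \ v i).Finite} :=
        fun i => cosupport_isFin (Wsup i) (v i) (hvW i)
      set 𝒳f : I → FinSpace α :=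
        fun i => ⟨Wsup i, {d | d ⊆ Wsup i ∧ (d \ v i).Finite}, hXfs i⟩ with h𝒳def
      have hcsub : ∀ i, c i ⊆ (𝒳f i).web ×ˢ (𝒜 i (j1 i)).web := by
        rintro i ⟨γ, δ⟩ (⟨h1, h2⟩ | ⟨h1, h2⟩)
        · exact ⟨hvW i h1, hvweb i (h2 ▸ h1)⟩
        · exact ⟨h1.1, hvweb i ((mem_singleton_iff.1 h2) ▸ hqv i)⟩
      have hcfinrel : ∀ i, FinitaryRel (𝒳f i).web (𝒳f i).fin
          ((𝒜 i (j1 i)).web) ((𝒜 i (j1 i)).fin) (c i) := by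
        intro i
        constructor
        · intro d _
          refine (𝒜 i (j1 i)).downward (hvfin i) ?_
          rintro δ ⟨γ, _, (⟨h1, h2⟩ | ⟨_, h2⟩)⟩
          · rw [← show γ = δ from h2]; exact h1
          · rw [show δ = qb i from h2]; exact hqv i
        · intro b' hb'
          constructor
          · rintro γ ⟨δ, _, hγδ⟩
            rcases hγδ with (⟨h1, _⟩ | ⟨h1, _⟩)
            · exact hvW i h1
            · exact h1.1
          · intro d hd
            have hsub2 : d ∩ rimage (rrev (c i)) b' ⊆ (d \ v i) ∪ (v i ∩ b') := by
              rintro γ ⟨hγd, δ, hδ, hγδ⟩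
              by_cases hγv : γ ∈ v i
              · rcases hγδ with (⟨_, h2⟩ | ⟨h1, _⟩)
                · refine Or.inr ⟨hγv, ?_⟩
                  rw [show γ = δ from h2]; exact hδ
                · exact absurd hγv h1.2
              · exact Or.inl ⟨hγd, hγv⟩
            exact ((hd.2).union (hb'.2 (v i) (hvfin i))).subset hsub2
      have htr := (htrans 𝒳f (fun i => 𝒜 i (j1 i)) c hcsub hcfinrel).2
      have hΦweb : Φx ∈ Tobj (fun i => (𝒜 i (j1 i)).web) := by
        have h1 : Tmap c ⊆ Tobj Wsup ×ˢ Tobj v := by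
          refine hT_sub Wsup v c ?_
          rintro i ⟨γ, δ⟩ (⟨h1, h2⟩ | ⟨h1, h2⟩)
          · exact ⟨hvW i h1, h2 ▸ h1⟩
          · exact ⟨h1.1, (mem_singleton_iff.1 h2) ▸ hqv i⟩
        exact hmono v _ (fun i => hvweb i) (h1 hΦ1).2
      have hfib := htr {Φx} ⟨singleton_subset_iff.2 hΦweb,
        fun a _ => (finite_singleton Φx).subset inter_subset_right⟩
      set Zs : Set β := range (fun t : ℕ => z t) with hZdef
      have hZmem : Zs ⊆ (Tobj fun i => (𝒳f i).web) ∧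
          ∀ i, rimage (own i fun j => (𝒳f j).web) Zs ∈ (𝒳f i).fin := by
        constructor
        · rintro y ⟨t, rfl⟩
          exact (hT_sub (W k) Wsup (ρ t) (hρsubW t) (hz1 t)).2
        · intro i
          have hZv : rimage (own i Wsup) Zs ⊆ v i := by
            rintro γ' ⟨y, ⟨t, rfl⟩, hpair⟩
            have hlax := hown_lax i (W k) Wsup (ρ t) (hρsubW t)
            have hmem2 : ((x : β), γ') ∈ rcomp (own i Wsup) (Tmap (ρ t)) :=
              ⟨z t, hz1 t, hpair⟩
            obtain ⟨γ, hγ1, hγ2⟩ := hlax hmem2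
            have hγu : γ ∈ rimage (own i Wsup) s :=
              ⟨x, hx, (hcoh (W k) Wsup (hWsub k) i x γ hxA).1 hγ1⟩
            have hγv : γ ∈ v i := Or.inl hγu
            rcases hγ2 with (⟨_, h2⟩ | ⟨h1, _⟩)
            · rw [← show γ = γ' from h2]; exact hγv
            · exact absurd (hvD i hγv) h1.2
          refine ⟨hZv.trans (hvW i), ?_⟩
          have he : rimage (own i Wsup) Zs \ v i = ∅ := by
            rw [diff_eq_empty]; exact hZv
          rw [he]; exact finite_empty
      have hZfin : Zs.Finite := by
        have h1 := hfib.2 Zs hZmem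
        have h2 : Zs ⊆ rimage (rrev (Tmap c)) {Φx} := by
          rintro y ⟨t, rfl⟩
          exact ⟨Φx, rfl, hzc t⟩
        rwa [inter_eq_self_of_subset_left h2] at h1
      -- pigeonhole : a collision among the z t
      have hcoll : ∃ t t' : ℕ, t ≠ t' ∧ z t = z t' := by
        have hninj : ¬Function.Injective z := by
          intro hinj
          exact (Set.infinite_range_of_injective hinj) hZfin
        rw [Function.not_injective_iff] at hninj
        obtain ⟨t, t', h1, h2⟩ := hninj
        exact ⟨t, t', h2, h1⟩
      obtain ⟨t, t', htt, hzz⟩ := hcoll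
      -- the collision puts z t into Tobj D
      have hzRim : ∀ t0 : ℕ, z t0 ∈ Tobj (Rim t0) :=
        fun t0 => (hT_sub (W k) (Rim t0) (ρ t0) (hρsub t0) (hz1 t0)).2
      have hzD : z t ∈ Tobj D := by
        have h1 : z t ∈ Tobj (Rim t) ∩ Tobj (Rim t') := ⟨hzRim t, hzz ▸ hzRim t'⟩
        rw [← hmeet] at h1
        refine hmono _ _ ?_ h1
        rintro i δ ⟨(h2 | ⟨γ, hγ, rfl⟩), hR'⟩
        · exact h2
        · rcases hR' with (h3 | ⟨γ', hγ', h4⟩)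
          · exact h3
          · obtain ⟨hnP, hγWv⟩ := hAD i γ hγ
            obtain ⟨_, hγWv'⟩ := hAD i γ' hγ'
            exact absurd ((hee i hnP).2 t γ t' γ' hγWv hγWv' h4).2 htt
      -- diagonal pairs of z t
      have hrrid : ∀ (r : I → Set (α × α)) (Dd : I → Set α),
          ((fun i => rcomp (r i) (rid (Dd i))) = fun i => rid (Dd i)) →
          ∀ y ∈ Tobj Dd, (y, y) ∈ Tmap r := by
        intro r Dd heq y hy
        have h0 : Tmap (fun i => rcomp (r i) (rid (Dd i))) =
            rcomp (Tmap r) (rid (Tobj Dd)) := by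
          have h0' := hT_comp (fun i => rid (Dd i)) r
          rwa [hT_id] at h0'
        have h1 : rid (Tobj Dd) = rcomp (Tmap r) (rid (Tobj Dd)) := by
          rw [← h0, heq, hT_id]
        have h2 : ((y : β), y) ∈ rcomp (Tmap r) (rid (Tobj Dd)) := by
          rw [← h1]; exact ⟨hy, rfl⟩
        obtain ⟨b, hb1, hb2⟩ := h2
        have hyb : y = b := hb1.2
        subst hyb
        exact hb2
      have heq1 : (fun i => rcomp (ρ t i) (rid (D i))) = fun i => rid (D i) := by
        funext i
        ext ⟨γ, δ⟩
        constructor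
        · rintro ⟨b, ⟨hb1, hb2⟩, hρp⟩
          rw [← show γ = b from hb2] at hρp
          rcases hρp with (⟨_, h2⟩ | ⟨h1, _⟩)
          · exact ⟨hb1, h2⟩
          · exact absurd hb1 h1.2
        · rintro ⟨h1, h2⟩
          exact ⟨γ, ⟨h1, rfl⟩, Or.inl ⟨h1, h2⟩⟩
      have heq2 : (fun i => rcomp (rrev (ρ t i)) (rid (D i))) = fun i => rid (D i) := by
        funext i
        ext ⟨γ, δ⟩
        constructor
        · rintro ⟨b, ⟨hb1, hb2⟩, hρp⟩
          rw [← show γ = b from hb2] at hρp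
          rcases hρp with (⟨h1, h2⟩ | ⟨h1, h2⟩)
          · exact ⟨hb1, (show δ = γ from h2).symm⟩
          · obtain ⟨hnP, hδWv⟩ := hAD i δ h1
            have heval : e i t δ ∈ Wsup i \ v i := (hee i hnP).1 t δ hδWv
            have hDv : D i = v i := by
              simp only [hDdef]
              rw [if_neg hnP]
            exfalso
            have hγv2 : γ ∈ v i := by rw [← hDv]; exact hb1
            have hγn : γ ∉ v i := by
              rw [show γ = e i t δ from h2]; exact heval.2
            exact hγn hγv2
        · rintro ⟨h1, h2⟩
          exact ⟨γ, ⟨h1, rfl⟩, by rw [← h2]; exact Or.inl ⟨h1, rfl⟩⟩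
      have hzzρ : (z t, z t) ∈ Tmap (ρ t) := hrrid (ρ t) D heq1 _ hzD
      have hzzρr : (z t, z t) ∈ Tmap (fun i => rrev (ρ t i)) :=
        hrrid (fun i => rrev (ρ t i)) D heq2 _ hzD
      -- reverse functionality : x = z t
      have hc1 : ∀ i, rcomp (rrev (ρ t i)) (rrev (rrev (ρ t i))) ⊆ rid (W k i) := by
        intro i
        rw [rrev_rrev]
        rintro ⟨γ, δ⟩ ⟨ε, hγε, hδε⟩
        rcases hγε with (⟨h1, h2⟩ | ⟨h1, h2⟩) <;> rcases hδε with (⟨h3, h4⟩ | ⟨h3, h4⟩)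
        · exact ⟨hDA i h1, h2.trans h4.symm⟩
        · obtain ⟨hnP, hδWv⟩ := hAD i δ h3
          have heval : e i t δ ∈ Wsup i \ v i := (hee i hnP).1 t δ hδWv
          have hDv : D i = v i := by
            simp only [hDdef]; rw [if_neg hnP]
          have hεD : ε ∈ v i := by
            rw [← hDv, ← show γ = ε from h2]; exact h1
          have hεn : ε ∉ v i := by
            rw [show ε = e i t δ from h4]; exact heval.2
          exact absurd hεD hεn
        · obtain ⟨hnP, hγWv⟩ := hAD i γ h1
          have heval : e i t γ ∈ Wsup i \ v i := (hee i hnP).1 t γ hγWv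
          have hDv : D i = v i := by
            simp only [hDdef]; rw [if_neg hnP]
          have hεD : ε ∈ v i := by
            rw [← hDv, ← show δ = ε from h4]; exact h3
          have hεn : ε ∉ v i := by
            rw [show ε = e i t γ from h2]; exact heval.2
          exact absurd hεD hεn
        · obtain ⟨hnP, hγWv⟩ := hAD i γ h1
          obtain ⟨_, hδWv⟩ := hAD i δ h3
          exact ⟨h1.1, ((hee i hnP).2 t γ t δ hγWv hδWv (h2.symm.trans h4)).1⟩
      have hc2 : ∀ i, rid (Rim t i) ⊆
          rcomp (rrev (rrev (ρ t i))) (rrev (ρ t i)) := by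
        intro i
        rw [rrev_rrev]
        rintro ⟨δ, δ'⟩ ⟨h1, h2⟩
        rcases h1 with (hD1 | ⟨γ, hγ, hδe⟩)
        · exact ⟨δ, Or.inl ⟨hD1, rfl⟩, h2 ▸ Or.inl ⟨hD1, rfl⟩⟩
        · exact ⟨γ, by rw [hδe]; exact Or.inr ⟨hγ, rfl⟩,
            by rw [← h2, hδe]; exact Or.inr ⟨hγ, rfl⟩⟩
      have hrevfun := (hfun (Rim t) (W k) (fun i => rrev (ρ t i)) hc1 hc2).2
      have hzzρ' : (z t, z t) ∈ Tmap (fun i => rrev (rrev (ρ t i))) := by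
        have he3 : (fun i => rrev (rrev (ρ t i))) = ρ t :=
          funext fun i => rrev_rrev (ρ t i)
        rw [he3]
        exact hzzρ
      have hxz : x = z t := hrevfun (z t) (z t) x hzzρr hzzρ' (hz2 t)
      -- conclusion
      have hDsub : ∀ i, D i ⊆ (𝒜 i (j3 i)).web := by
        intro i
        by_cases hP : (Wsup i \ v i).Finite
        · have hDW : D i = W k i := by
            simp only [hDdef]; rw [if_pos hP]
          rw [hDW]
          exact (hAW i).trans (hj32 i hP)
        · have hDv : D i = v i := by
            simp only [hDdef]; rw [if_neg hP]
          rw [hDv]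
          exact (hvweb i).trans (hj31 i).1
      rw [hxz]
      exact hmono _ _ hDsub hzD
    
  -- the covering lemma (kernel)
  have hCOV : ∀ s ∈ {s | s ⊆ Tobj Wsup ∧ ∀ i, rimage (own i Wsup) s ∈ Fsup i},
      s ∈ ⋃ j : ∀ i, J i, TF j := by
    intro s hs
    have hfin : ∀ i, ∃ j : J i, rimage (own i Wsup) s ∈ (𝒜 i j).fin := by
      intro i
      have h1 : rimage (own i Wsup) s ∈ ⋃ j, (𝒜 i j).fin := by
        rw [← hexact i]; exact hs.2 i
      exact mem_iUnion.1 h1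
    choose j0 hj0 using hfin
    obtain ⟨k, hk⟩ := hsupport s hs.1 (fun i => ⟨j0 i, hj0 i⟩)
    obtain ⟨m, hm1, hm2⟩ := hup k j0
    have hsm : s ⊆ Tobj (W m) := hk.trans (hmono _ _ (fun i => (hm1 i).1))
    refine mem_iUnion.2 ⟨m, hsm, fun i => ?_⟩
    have h2 : rimage (own i (W m)) s = rimage (own i Wsup) s :=
      (hagree (W m) (hWsub m) s hsm i).symm
    rw [h2]
    exact (hm2 i).2 (hj0 i)
  refine ⟨hclaim1, ?_, ?_⟩
  · apply Subset.antisymm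
    · intro s hs; exact hL2 (hCOV s hs)
    · exact hL3
  · apply Subset.antisymm
    · intro t ht; exact hCOV t (hL3 ht)
    · exact hL2

end FinitenessPaper
end
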